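/- Let p ≥ 1 and s1, s2 ≥ 1 be integers, and let L̄ be the reduced Laplacian of Cone(T(p,s1,s2)) with respect to the cone vertex, a square integer matrix indexed by the p+s1+s2 vertices of T(p,s1,s2). Then for every i with 3 ≤ i ≤ p, the integer vector e_{π_2} − F_{2i−4}·e_{π_{i−1}} + F_{2i−6}·e_{π_i} lies in the ℤ-span of the columns of L̄ (equivalently, in the quotient ℤ^{V(T)}/im(L̄) one has [e_{π_2}] = F_{2i−4}·[e_{π_{i−1}}] − F_{2i−6}·[e_{π_i}]). -/

import Mathlib

/-- The cone over a graph: add a new vertex `none` adjacent to everything. -/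
def coneGraph {V : Type*} (G : SimpleGraph V) : SimpleGraph (Option V) :=
  SimpleGraph.fromRel (fun u v =>
    u = none ∨ ∃ a b, u = some a ∧ v = some b ∧ G.Adj a b)


/-- The bi-coconut tree `T(p,s1,s2)`: vertices `0,…,p-1` form a path (`π_i` is
vertex `i-1`), vertices `p,…,p+s1-1` are leaves attached to `π_1 = 0`, and
vertices `p+s1,…,p+s1+s2-1` are leaves attached to `π_p = p-1`. -/
def biCoconut (p s1 s2 : ℕ) : SimpleGraph (Fin (p + s1 + s2)) :=
  SimpleGraph.fromRel (fun u v =>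
    ((u : ℕ) + 1 = (v : ℕ) ∧ (v : ℕ) < p) ∨
    ((u : ℕ) = 0 ∧ p ≤ (v : ℕ) ∧ (v : ℕ) < p + s1) ∨
    ((u : ℕ) = p - 1 ∧ p + s1 ≤ (v : ℕ)))


open scoped Classical in
/-- The reduced Laplacian of the cone over `G`, with respect to the cone vertex:
the Laplacian matrix `D - A` of `coneGraph G` with the row and column of the
cone vertex deleted. -/
noncomputable def reducedLap {V : Type*} [Fintype V] (G : SimpleGraph V) :
    Matrix V V ℤ :=
  ((coneGraph G).lapMatrix ℤ).submatrix some some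

lemma keylemma (n : ℕ) (v1 vim2 vim1 vi : Fin n) (a b : ℤ) :
    ((Pi.single v1 (1:ℤ) - (3*a-b) • Pi.single vim1 (1:ℤ) + a • Pi.single vi (1:ℤ) : Fin n → ℤ))
    = (Pi.single v1 (1:ℤ) - a • Pi.single vim2 (1:ℤ) + b • Pi.single vim1 (1:ℤ))
      + (Pi.single vim1 (3 * -a) - Pi.single vim2 (-a) - Pi.single vi (-a)) := by
  have hs : ∀ (v : Fin n) (c : ℤ), (Pi.single v c : Fin n → ℤ) = c • Pi.single v (1:ℤ) := by
    intro v c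
    funext x
    simp [Pi.single_apply, mul_ite]
  rw [hs vim1 (3 * -a), hs vim2 (-a), hs vi (-a)]
  module

open scoped Classical

lemma bi_adj_interior (p s1 s2 j : ℕ) (hj : 1 ≤ j) (hjp : j + 1 < p)
    (h : j < p + s1 + s2) (w : Fin (p + s1 + s2)) :
    (biCoconut p s1 s2).Adj ⟨j, h⟩ w ↔ ((w : ℕ) = j - 1 ∨ (w : ℕ) = j + 1) := by
  simp only [biCoconut, SimpleGraph.fromRel_adj, ne_eq, Fin.ext_iff]
  omega

lemma cone_adj_some_some {V : Type*} (G : SimpleGraph V) (u v : V) :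
    (coneGraph G).Adj (some u) (some v) ↔ G.Adj u v := by
  simp only [coneGraph, SimpleGraph.fromRel_adj, ne_eq, Option.some.injEq]
  constructor
  · rintro ⟨h, h2 | h2⟩ <;>
    · obtain ⟨a, b, rfl, rfl, hab⟩ := h2.resolve_left (by simp)
      first | exact hab | exact hab.symm
  · intro h
    exact ⟨fun he => G.ne_of_adj h he, Or.inl (Or.inr ⟨u, v, rfl, rfl, h⟩)⟩

lemma cone_adj_some_none {V : Type*} (G : SimpleGraph V) (u : V) :
    (coneGraph G).Adj (some u) none := by
  simp [coneGraph, SimpleGraph.fromRel_adj]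

lemma cone_deg_interior (p s1 s2 j : ℕ) (hj : 1 ≤ j) (hjp : j + 1 < p)
    (h : j < p + s1 + s2) :
    (coneGraph (biCoconut p s1 s2)).degree (some ⟨j, h⟩) = 3 := by
  rw [← SimpleGraph.card_neighborFinset_eq_degree]
  have hset : (coneGraph (biCoconut p s1 s2)).neighborFinset (some ⟨j, h⟩)
      = {none, some ⟨j - 1, by omega⟩, some ⟨j + 1, by omega⟩} := by
    ext u
    match u with
    | none => simp [SimpleGraph.mem_neighborFinset, cone_adj_some_none]
    | some w =>
      simp only [SimpleGraph.mem_neighborFinset, cone_adj_some_some,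
        bi_adj_interior p s1 s2 j hj hjp h, Finset.mem_insert, Finset.mem_singleton,
        Option.some.injEq, Fin.ext_iff]
      simp only [reduceCtorEq, false_or]
      try omega
  rw [hset]
  rw [Finset.card_insert_of_notMem (by simp),
    Finset.card_insert_of_notMem (by simp [Fin.ext_iff]; try omega),
    Finset.card_singleton]

lemma entry_interior (p s1 s2 j : ℕ) (hj : 1 ≤ j) (hjp : j + 1 < p)
    (h : j < p + s1 + s2) (u : Fin (p + s1 + s2)) :
    reducedLap (biCoconut p s1 s2) u ⟨j, h⟩ =
      if (u : ℕ) = j then 3 else if (u : ℕ) = j - 1 ∨ (u : ℕ) = j + 1 then -1 else 0 := by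
  have hadj : (coneGraph (biCoconut p s1 s2)).Adj (some u) (some ⟨j, h⟩) ↔
      ((u : ℕ) = j - 1 ∨ (u : ℕ) = j + 1) := by
    rw [cone_adj_some_some, SimpleGraph.adj_comm, bi_adj_interior p s1 s2 j hj hjp h]
  have hso : (some u = some (⟨j, h⟩ : Fin (p + s1 + s2))) ↔ (u : ℕ) = j := by
    simp [Fin.ext_iff]
  rw [reducedLap]
  simp only [Matrix.submatrix_apply, SimpleGraph.lapMatrix, Matrix.sub_apply,
    SimpleGraph.degMatrix, Matrix.diagonal, Matrix.of_apply, SimpleGraph.adjMatrix_apply,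
    hadj, hso]
  by_cases hu : (u : ℕ) = j
  · have hueq : u = ⟨j, h⟩ := Fin.ext hu
    subst hueq
    simp only [hu, if_true, cone_deg_interior p s1 s2 j hj hjp h]
    rw [if_neg (by omega)]
    norm_num
  · simp only [hu, if_false]
    split_ifs <;> norm_num

lemma col_interior (p s1 s2 j : ℕ) (hj : 1 ≤ j) (hjp : j + 1 < p)
    (h : j < p + s1 + s2) (c : ℤ) :
    (reducedLap (biCoconut p s1 s2)).mulVec (Pi.single ⟨j, h⟩ c) =
      Pi.single (⟨j, h⟩ : Fin (p + s1 + s2)) (3 * c)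
        - Pi.single (⟨j - 1, by omega⟩ : Fin (p + s1 + s2)) c
        - Pi.single (⟨j + 1, by omega⟩ : Fin (p + s1 + s2)) c := by
  rw [Matrix.mulVec_single]
  funext u
  simp only [Pi.sub_apply, Pi.smul_apply, Matrix.col_apply, op_smul_eq_mul, Pi.single_apply, entry_interior p s1 s2 j hj hjp h u, Fin.ext_iff]
  split_ifs <;> first | ring1 | (exfalso; omega)



lemma fib_key (i : ℕ) (hi : 3 ≤ i) :
    Nat.fib (2 * (i + 1) - 4) + Nat.fib (2 * i - 6) = 3 * Nat.fib (2 * i - 4) := by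
  obtain ⟨k, rfl⟩ : ∃ k, i = k + 3 := ⟨i - 3, by omega⟩
  have e1 : 2 * (k + 3 + 1) - 4 = 2 * k + 2 + 2 := by omega
  have e2 : 2 * (k + 3) - 6 = 2 * k := by omega
  have e3 : 2 * (k + 3) - 4 = 2 * k + 2 := by omega
  rw [e1, e2, e3, Nat.fib_add_two, Nat.fib_add_two (n := 2 * k + 1),
    Nat.fib_add_two (n := 2 * k)]
  omega

/-- Let `p ≥ 1`, `s1, s2 ≥ 1`, and let `L̄` be the reduced
Laplacian of `Cone(T(p,s1,s2))` with respect to the cone vertex. For every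
`3 ≤ i ≤ p`, the vector `e_{π_2} - F_{2i-4}·e_{π_{i-1}} + F_{2i-6}·e_{π_i}`
lies in the ℤ-span of the columns of `L̄` (the range of `v ↦ L̄ *ᵥ v`). -/
theorem relation_pi_two (p s1 s2 : ℕ) (hp : 1 ≤ p) (hs1 : 1 ≤ s1) (hs2 : 1 ≤ s2)
    (i : ℕ) (hi : 3 ≤ i) (hip : i ≤ p) :
    (Pi.single (⟨1, by omega⟩ : Fin (p + s1 + s2)) (1 : ℤ)
        - (Nat.fib (2 * i - 4) : ℤ) •
            Pi.single (⟨i - 2, by omega⟩ : Fin (p + s1 + s2)) (1 : ℤ)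
        + (Nat.fib (2 * i - 6) : ℤ) •
            Pi.single (⟨i - 1, by omega⟩ : Fin (p + s1 + s2)) (1 : ℤ)) ∈
      LinearMap.range (reducedLap (biCoconut p s1 s2)).mulVecLin := by
  induction i, hi using Nat.le_induction with
  | base =>
    have h2 : Nat.fib (2 * 3 - 4) = 1 := rfl
    have h0 : Nat.fib (2 * 3 - 6) = 0 := rfl
    have hfin : ((⟨3 - 2, by omega⟩ : Fin (p + s1 + s2))) = ⟨1, by omega⟩ := rfl
    rw [h2, h0, hfin]
    simp only [Nat.cast_one, Nat.cast_zero, one_smul, zero_smul, sub_self, add_zero]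
    exact Submodule.zero_mem _
  | succ i hi3 ih =>
    have hip' : i ≤ p := by omega
    have hmem := ih hip'
    have hA : (Nat.fib (2 * (i + 1) - 4) : ℤ)
        = 3 * (Nat.fib (2 * i - 4) : ℤ) - (Nat.fib (2 * i - 6) : ℤ) := by
      have h := fib_key i hi3
      omega
    have hB : (Nat.fib (2 * (i + 1) - 6) : ℤ) = (Nat.fib (2 * i - 4) : ℤ) := by
      have h6 : 2 * (i + 1) - 6 = 2 * i - 4 := by omega
      rw [h6]
    rw [hA, hB]
    have hcol := col_interior p s1 s2 (i - 1) (by omega) (by omega) (by omega)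
      (-(Nat.fib (2 * i - 4) : ℤ))
    have hidx1 : ((⟨i - 1 - 1, by omega⟩ : Fin (p + s1 + s2)))
        = ⟨i - 2, by omega⟩ := rfl
    have hidx2 : ((⟨i - 1 + 1, by omega⟩ : Fin (p + s1 + s2)))
        = ⟨i, by omega⟩ := by
      apply Fin.ext
      simp only [Fin.val_mk]
      omega
    rw [hidx1, hidx2] at hcol
    show (Pi.single (⟨1, by omega⟩ : Fin (p + s1 + s2)) (1 : ℤ)
          - (3 * (Nat.fib (2 * i - 4) : ℤ) - (Nat.fib (2 * i - 6) : ℤ)) •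
              Pi.single (⟨i - 1, by omega⟩ : Fin (p + s1 + s2)) (1 : ℤ)
          + (Nat.fib (2 * i - 4) : ℤ) •
              Pi.single (⟨i, by omega⟩ : Fin (p + s1 + s2)) (1 : ℤ)) ∈
        LinearMap.range (reducedLap (biCoconut p s1 s2)).mulVecLin
    rw [keylemma (p + s1 + s2) ⟨1, by omega⟩ ⟨i - 2, by omega⟩ ⟨i - 1, by omega⟩
      ⟨i, by omega⟩ (Nat.fib (2 * i - 4) : ℤ) (Nat.fib (2 * i - 6) : ℤ)]
    refine Submodule.add_mem _ hmem ⟨Pi.single ⟨i - 1, by omega⟩ (-(Nat.fib (2 * i - 4) : ℤ)), ?_⟩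
    simpa [Matrix.mulVecLin_apply] using hcol
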